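/- Let H ∈ (1/2, 1). Then d(h)/h^{2H} → 1 as h → 0 from the right, where d(h) = (1+h)^{2H} − (((1+h)^{2H} + 1 − h^{2H})/2)². -/

import Mathlib

open Filter Set
open scoped Topology

theorem fbm_determinant_asymptotics (H : ℝ) (hH : H ∈ Set.Ioo (1/2 : ℝ) 1) :
    Filter.Tendsto (fun h : ℝ =>
      ((1 + h) ^ (2*H) - (((1 + h) ^ (2*H) + 1 - h ^ (2*H)) / 2) ^ 2) / h ^ (2*H))
      (𝓝[>] 0) (𝓝 1) := by
  obtain ⟨h1, h2⟩ := hH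
  have ha1 : (1:ℝ) < 2*H := by linarith
  have ha0 : (0:ℝ) < 2*H := by linarith
  have ha2 : 2*H < 2 := by linarith
  -- L1
  have L1 : Tendsto (fun h : ℝ => (1+h) ^ (2*H)) (𝓝[>] (0:ℝ)) (𝓝 1) := by
    have : ContinuousAt (fun h : ℝ => (1+h) ^ (2*H)) 0 := by
      apply ContinuousAt.rpow_const
      · exact continuousAt_const.add continuousAt_id
      · left; norm_num
    have := this.tendsto
    simp only [add_zero, Real.one_rpow] at this
    exact tendsto_nhdsWithin_of_tendsto_nhds this
  -- L2
  have L2 : ∀ p : ℝ, 0 < p → Tendsto (fun h : ℝ => h ^ p) (𝓝[>] (0:ℝ)) (𝓝 0) := by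
    intro p hp
    have : ContinuousAt (fun h : ℝ => h ^ p) 0 := by
      apply ContinuousAt.rpow_const continuousAt_id
      right; linarith
    have := this.tendsto
    rw [Real.zero_rpow (ne_of_gt hp)] at this
    exact tendsto_nhdsWithin_of_tendsto_nhds this
  -- L3 : slope
  have L3 : Tendsto (fun h : ℝ => ((1+h) ^ (2*H) - 1)/h) (𝓝[>] (0:ℝ)) (𝓝 (2*H)) := by
    have hd : HasDerivAt (fun x : ℝ => x ^ (2*H)) (2*H) 1 := by
      have := Real.hasDerivAt_rpow_const (x := (1:ℝ)) (p := 2*H) (Or.inl one_ne_zero)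
      simpa using this
    have hd2 : HasDerivAt (fun h : ℝ => (1+h) ^ (2*H)) (2*H) 0 := by
      have hc : HasDerivAt (fun h : ℝ => 1 + h) 1 0 := (hasDerivAt_id 0).const_add 1
      have : HasDerivAt ((fun x : ℝ => x ^ (2*H)) ∘ (fun h : ℝ => 1 + h)) (2*H * 1) 0 :=
        HasDerivAt.comp 0 (by simpa using hd) hc
      simpa [Function.comp_def] using this
    have hslope := hasDerivAt_iff_tendsto_slope.mp hd2
    have : Tendsto (slope (fun h : ℝ => (1+h) ^ (2*H)) 0) (𝓝[>] 0) (𝓝 (2*H)) :=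
      hslope.mono_left (nhdsWithin_mono 0 (fun x hx => ne_of_gt hx))
    refine this.congr (fun x => ?_)
    simp [slope_def_field, div_eq_div_iff]
  -- combined
  have key : Tendsto (fun h : ℝ =>
      ((1+h) ^ (2*H) + 1)/2 - (((1+h) ^ (2*H) - 1)/h)^2 * h ^ (2 - 2*H)/4 - h ^ (2*H)/4)
      (𝓝[>] (0:ℝ)) (𝓝 1) := by
    have t1 : Tendsto (fun h : ℝ => ((1+h) ^ (2*H) + 1)/2) (𝓝[>] (0:ℝ)) (𝓝 1) := by
      have := (L1.add (tendsto_const_nhds (x := (1:ℝ)))).div_const 2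
      norm_num at this
      exact this
    have t2 : Tendsto (fun h : ℝ => (((1+h) ^ (2*H) - 1)/h)^2 * h ^ (2 - 2*H)/4)
        (𝓝[>] (0:ℝ)) (𝓝 0) := by
      have := ((L3.pow 2).mul (L2 (2 - 2*H) (by linarith))).div_const 4
      simpa using this
    have t3 := (L2 (2*H) ha0).div_const 4
    have := (t1.sub t2).sub t3
    norm_num at this
    exact this
  refine key.congr' ?_
  filter_upwards [self_mem_nhdsWithin] with h (hh : 0 < h)
  have hx : h ^ (2*H) ≠ 0 := by positivity
  have hh0 : h ≠ 0 := ne_of_gt hh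
  have hpow : h ^ (2 - 2*H) * h ^ (2*H) = h ^ 2 := by
    rw [← Real.rpow_add hh]
    norm_num
  have hpow' : h ^ (2 * (1 - H)) * h ^ (2*H) = h ^ 2 := by
    rw [← hpow]; ring_nf
  field_simp
  linear_combination (-4 * ((1+h) ^ (2*H) - 1) ^ 2) * hpow'
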